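/- For every integer n ≥ 2 and all i, j ∈ {1,…,n−1}, the restriction of the Bruhat order to the set B_n^{(i,j)} is a total order; that is, any two bigrassmannian permutations with unique left descent i and unique right descent j are comparable in the Bruhat order. -/

import Mathlib

namespace Paper

/-- The simple transposition `s_i = (i, i+1)` (1-based) in `S_n`, realized as a
permutation of `Fin n`. For `i` outside `{1, …, n-1}` we set `s i = 1`. -/
def s (n i : ℕ) : Equiv.Perm (Fin n) :=
  if h : 1 ≤ i ∧ i < n then Equiv.swap ⟨i - 1, by omega⟩ ⟨i, by omega⟩ else 1

/-- The length of a permutation: its number of inversions. -/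
def len {n : ℕ} (w : Equiv.Perm (Fin n)) : ℕ :=
  (Finset.univ.filter (fun p : Fin n × Fin n => p.1 < p.2 ∧ w p.2 < w p.1)).card

/-- `i` is a left descent of `w` if `1 ≤ i ≤ n-1` and `ℓ(s_i w) < ℓ(w)`. -/
def IsLeftDescent {n : ℕ} (w : Equiv.Perm (Fin n)) (i : ℕ) : Prop :=
  1 ≤ i ∧ i ≤ n - 1 ∧ len (s n i * w) < len w

/-- `i` is a right descent of `w` if `1 ≤ i ≤ n-1` and `ℓ(w s_i) < ℓ(w)`. -/
def IsRightDescent {n : ℕ} (w : Equiv.Perm (Fin n)) (i : ℕ) : Prop :=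
  1 ≤ i ∧ i ≤ n - 1 ∧ len (w * s n i) < len w

/-- A permutation is bigrassmannian if it has exactly one left descent and
exactly one right descent. -/
def Bigrassmannian {n : ℕ} (w : Equiv.Perm (Fin n)) : Prop :=
  (∃! i, IsLeftDescent w i) ∧ (∃! j, IsRightDescent w j)

/-- One step of the Bruhat order: `w ⋖ t * w` for a transposition `t`
with `ℓ(w) < ℓ(t w)`. -/
def BruhatStep {n : ℕ} (w w' : Equiv.Perm (Fin n)) : Prop :=
  ∃ a b : Fin n, a ≠ b ∧ w' = Equiv.swap a b * w ∧ len w < len w'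

/-- The Bruhat order on `S_n`: the partial order generated by `w < tw` whenever
`t` is a transposition and `ℓ(w) < ℓ(tw)`. -/
def BruhatLE {n : ℕ} : Equiv.Perm (Fin n) → Equiv.Perm (Fin n) → Prop :=
  Relation.ReflTransGen BruhatStep

/-- Strict Bruhat order. -/
def BruhatLT {n : ℕ} (x y : Equiv.Perm (Fin n)) : Prop :=
  BruhatLE x y ∧ x ≠ y

/-- The product `s_a s_{a+1} ⋯ s_b` of consecutive simple transpositions. -/
def ascRun (n a b : ℕ) : Equiv.Perm (Fin n) :=
  ((List.range (b + 1 - a)).map (fun t => s n (a + t))).prod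

/-- For `i ≤ j`: `b(i,j,k) = (s_i ⋯ s_{j+k})(s_{i-1} ⋯ s_{j+k-1}) ⋯ (s_{i-k} ⋯ s_j)`. -/
def bAux (n i j k : ℕ) : Equiv.Perm (Fin n) :=
  ((List.range (k + 1)).map (fun m => ascRun n (i - m) (j + k - m))).prod

/-- The bigrassmannian permutation `b(i,j,k)`; for `j < i` it is `b(j,i,k)⁻¹`. -/
def b (n i j k : ℕ) : Equiv.Perm (Fin n) :=
  if i ≤ j then bAux n i j k else (bAux n j i k)⁻¹

/-- The value `w(i)` of a permutation `w ∈ S_n` at `i ∈ {1, …, n}`, 1-based. -/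
def act {n : ℕ} (w : Equiv.Perm (Fin n)) (i : ℕ) : ℕ :=
  if h : 1 ≤ i ∧ i ≤ n then ((w ⟨i - 1, by omega⟩ : Fin n) : ℕ) + 1 else i

/-- The essential set of a permutation `w ∈ S_n`. -/
def Ess {n : ℕ} (w : Equiv.Perm (Fin n)) : Set (ℕ × ℕ) :=
  {p | 1 ≤ p.1 ∧ p.1 ≤ n - 1 ∧ 1 ≤ p.2 ∧ p.2 ≤ n - 1 ∧
    p.1 < act w⁻¹ p.2 ∧ p.2 < act w p.1 ∧
    act w (p.1 + 1) ≤ p.2 ∧ act w⁻¹ (p.2 + 1) ≤ p.1}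

/-- The rank function `r_w(i,j) = |{k ≤ i : w(k) ≤ j}|` (1-based). -/
def rnk {n : ℕ} (w : Equiv.Perm (Fin n)) (i j : ℕ) : ℕ :=
  ((Finset.Icc 1 i).filter (fun k => act w k ≤ j)).card

/-- The co-rank function `t_w(i,j) = min{i,j} - r_w(i,j)`. -/
def cork {n : ℕ} (w : Equiv.Perm (Fin n)) (i j : ℕ) : ℕ :=
  min i j - rnk w i j

/-- The set of bigrassmannian permutations `y ≤ w` in Bruhat order. -/
def BSet {n : ℕ} (w : Equiv.Perm (Fin n)) : Set (Equiv.Perm (Fin n)) :=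
  {y | Bigrassmannian y ∧ BruhatLE y w}

/-- The set of Bruhat-maximal elements of `BSet w`. -/
def BM {n : ℕ} (w : Equiv.Perm (Fin n)) : Set (Equiv.Perm (Fin n)) :=
  {y ∈ BSet w | ∀ z ∈ BSet w, BruhatLE y z → z = y}


set_option maxHeartbeats 1600000

-- ======================================================================
-- Auxiliary development
-- ======================================================================

section AuxLen
variable {n : ℕ}

lemma len_inv' (w : Equiv.Perm (Fin n)) : len w⁻¹ = len w := by
  unfold len
  apply Finset.card_bij' (fun p _ => (w⁻¹ p.2, w⁻¹ p.1)) (fun p _ => (w p.2, w p.1))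
  · intro p hp
    simp only [Finset.mem_filter, Finset.mem_univ, true_and] at hp ⊢
    simpa using hp.symm
  · intro p hp
    simp only [Finset.mem_filter, Finset.mem_univ, true_and] at hp ⊢
    simpa using hp.symm
  · intro p hp; simp
  · intro p hp; simp

lemma len_mul_swap (w : Equiv.Perm (Fin n)) (a b : Fin n)
    (hab : (a : ℕ) + 1 = (b : ℕ)) (h : w a < w b) :
    len w < len (w * Equiv.swap a b) := by
  classical
  unfold len
  set S := Finset.univ.filter (fun p : Fin n × Fin n => p.1 < p.2 ∧ w p.2 < w p.1) with hS
  set T := Finset.univ.filter (fun p : Fin n × Fin n =>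
    p.1 < p.2 ∧ (w * Equiv.swap a b) p.2 < (w * Equiv.swap a b) p.1) with hT
  have vne : ∀ {u v : Fin n}, u ≠ v → (u : ℕ) ≠ (v : ℕ) := fun h e => h (Fin.ext e)
  have hane : a ≠ b := by intro h'; rw [h'] at hab; omega
  have hltab : a < b := Fin.lt_def.mpr (by omega)
  have habT : (a, b) ∈ T := by
    simp only [hT, Finset.mem_filter, Finset.mem_univ, true_and, Equiv.Perm.mul_apply,
      Equiv.swap_apply_left, Equiv.swap_apply_right]
    refine Finset.mem_filter.mpr ⟨Finset.mem_univ _, ?_⟩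
    simp only [Equiv.swap_apply_left, Equiv.swap_apply_right]
    exact ⟨hltab, h⟩
  have key : ∀ p ∈ S, (Equiv.swap a b p.1, Equiv.swap a b p.2) ∈ T.erase (a, b) := by
    rintro ⟨p1, p2⟩ hp
    simp only [hS, Finset.mem_filter, Finset.mem_univ, true_and] at hp
    obtain ⟨h12, hw⟩ := hp
    have hne : ¬(p1 = a ∧ p2 = b) := by
      rintro ⟨rfl, rfl⟩
      exact absurd h (not_lt.mpr hw.le)
    have horder : Equiv.swap a b p1 < Equiv.swap a b p2 := by
      rcases eq_or_ne p1 a with rfl | h1a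
      · rcases eq_or_ne p2 b with rfl | h2b
        · exact absurd ⟨rfl, rfl⟩ hne
        · have h2a : p2 ≠ p1 := h12.ne'
          rw [Equiv.swap_apply_left, Equiv.swap_apply_of_ne_of_ne h2a.symm.symm h2b]
          have := vne h2b
          exact Fin.lt_def.mpr (by have := Fin.lt_def.mp h12; omega)
      · rcases eq_or_ne p1 b with rfl | h1b
        · have h2a : p2 ≠ a := fun e => absurd (e ▸ h12) (by
            rw [not_lt]; exact hltab.le)
          have h2b : p2 ≠ p1 := h12.ne'
          rw [Equiv.swap_apply_right, Equiv.swap_apply_of_ne_of_ne h2a h2b]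
          exact lt_trans hltab h12
        · rw [Equiv.swap_apply_of_ne_of_ne h1a h1b]
          rcases eq_or_ne p2 a with rfl | h2a
          · rw [Equiv.swap_apply_left]; exact lt_trans h12 hltab
          · rcases eq_or_ne p2 b with rfl | h2b
            · rw [Equiv.swap_apply_right]
              have := vne h1a
              exact Fin.lt_def.mpr (by have := Fin.lt_def.mp h12; omega)
            · rw [Equiv.swap_apply_of_ne_of_ne h2a h2b]; exact h12
    refine Finset.mem_erase.mpr ⟨?_, ?_⟩
    · rintro heq
      simp only [Prod.mk.injEq] at heq
      have e1 : p1 = b := by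
        have h1 := heq.1
        have h2 : Equiv.swap a b p1 = Equiv.swap a b b := by rw [Equiv.swap_apply_right, h1]
        exact (Equiv.swap a b).injective h2
      have e2 : p2 = a := by
        have h1 := heq.2
        have h2 : Equiv.swap a b p2 = Equiv.swap a b a := by rw [Equiv.swap_apply_left, h1]
        exact (Equiv.swap a b).injective h2
      subst e1; subst e2
      exact absurd h12 (not_lt.mpr hltab.le)
    · simp only [hT, Finset.mem_filter, Finset.mem_univ, true_and, Equiv.Perm.mul_apply,
        Equiv.swap_apply_self]
      refine Finset.mem_filter.mpr ⟨Finset.mem_univ _, ?_⟩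
      simp only [Equiv.swap_apply_self]
      exact ⟨horder, hw⟩
  calc S.card = (S.image (fun p => (Equiv.swap a b p.1, Equiv.swap a b p.2))).card := by
        rw [Finset.card_image_of_injective]
        intro p q hpq
        simp only [Prod.mk.injEq] at hpq
        exact Prod.ext ((Equiv.swap a b).injective hpq.1) ((Equiv.swap a b).injective hpq.2)
    _ ≤ (T.erase (a, b)).card := Finset.card_le_card (by
        intro q hq
        obtain ⟨p, hp, rfl⟩ := Finset.mem_image.mp hq
        exact key p hp)
    _ < T.card := Finset.card_erase_lt_of_mem habT

lemma s_eq (a : ℕ) (ha : a + 1 < n) :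
    s n (a + 1) = Equiv.swap ⟨a, by omega⟩ ⟨a + 1, ha⟩ := by
  unfold s
  rw [dif_pos ⟨Nat.le_add_left 1 a, ha⟩]
  refine congrArg₂ Equiv.swap ?_ rfl
  exact Fin.ext (by simp)

lemma s_inv (i : ℕ) : (s n i)⁻¹ = s n i := by
  unfold s
  split_ifs
  · exact Equiv.swap_inv _ _
  · simp

lemma rdesc_iff (w : Equiv.Perm (Fin n)) (a : ℕ) (ha : a + 1 < n) :
    len (w * s n (a + 1)) < len w ↔ w ⟨a + 1, ha⟩ < w ⟨a, by omega⟩ := by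
  rw [s_eq a ha]
  set A : Fin n := ⟨a, by omega⟩
  set B : Fin n := ⟨a + 1, ha⟩
  have hAB : (A : ℕ) + 1 = (B : ℕ) := rfl
  have hABne : A ≠ B := by intro h; have : (A : ℕ) = B := congrArg Fin.val h; simp [A, B] at this
  constructor
  · intro hlen
    rcases lt_trichotomy (w B) (w A) with h | h | h
    · exact h
    · exact absurd (w.injective h) (by intro e; exact hABne e.symm)
    · exact absurd hlen (not_lt.mpr (le_of_lt (len_mul_swap w A B hAB h)))
  · intro h
    have h1 : (w * Equiv.swap A B) A < (w * Equiv.swap A B) B := by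
      simp only [Equiv.Perm.mul_apply, Equiv.swap_apply_left, Equiv.swap_apply_right]
      exact h
    have h2 := len_mul_swap (w * Equiv.swap A B) A B hAB h1
    rwa [mul_assoc, Equiv.swap_mul_self, mul_one] at h2

lemma ldesc_iff_rdesc_inv (w : Equiv.Perm (Fin n)) (i : ℕ) :
    IsLeftDescent w i ↔ IsRightDescent w⁻¹ i := by
  unfold IsLeftDescent IsRightDescent
  have h1 : len (s n i * w) = len (w⁻¹ * s n i) := by
    calc len (s n i * w) = len ((s n i * w)⁻¹) := (len_inv' _).symm
      _ = len (w⁻¹ * s n i) := by rw [mul_inv_rev, s_inv]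
  rw [h1, len_inv' w]

end AuxLen

-- ======================================================================
-- Explicit permutation families
-- ======================================================================

def mk' (n : ℕ) (f g : ℕ → ℕ) (hf : ∀ m, m < n → f m < n) (hg : ∀ m, m < n → g m < n)
    (hgf : ∀ m, m < n → g (f m) = m) (hfg : ∀ m, m < n → f (g m) = m) : Equiv.Perm (Fin n) where
  toFun x := ⟨f x, hf x x.2⟩
  invFun x := ⟨g x, hg x x.2⟩
  left_inv x := Fin.ext (by simpa using hgf x x.2)
  right_inv x := Fin.ext (by simpa using hfg x x.2)

@[simp] lemma mk'_apply (n : ℕ) (f g hf hg hgf hfg) (x : Fin n) :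
    (mk' n f g hf hg hgf hfg) x = ⟨f x, hf x x.2⟩ := rfl

lemma step_right {n : ℕ} (c : Equiv.Perm (Fin n)) (a : ℕ) (h : a + 1 < n)
    (hlt : c ⟨a, by omega⟩ < c ⟨a + 1, h⟩) :
    BruhatStep c (c * Equiv.swap ⟨a, by omega⟩ ⟨a + 1, h⟩) := by
  refine ⟨c ⟨a, by omega⟩, c ⟨a + 1, h⟩, hlt.ne, ?_, ?_⟩
  · rw [Equiv.swap_apply_apply]; group
  · exact len_mul_swap c _ _ rfl hlt

lemma le_of_step_eq {n : ℕ} {c c' : Equiv.Perm (Fin n)} (a : ℕ) (h : a + 1 < n)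
    (hlt : c ⟨a, by omega⟩ < c ⟨a + 1, h⟩)
    (he : c * Equiv.swap ⟨a, by omega⟩ ⟨a + 1, h⟩ = c') : BruhatLE c c' :=
  Relation.ReflTransGen.single (he ▸ step_right c a h hlt)

def wfun (P k d t : ℕ) : ℕ :=
  if P ≤ t ∧ t < P + k then t + d else if P + k ≤ t ∧ t < P + k + d then t - k else t

def wP (n P k d : ℕ) (h : P + k + d ≤ n) : Equiv.Perm (Fin n) :=
  mk' n (wfun P k d) (wfun P d k)
    (by intro m hm; unfold wfun; split_ifs <;> omega)
    (by intro m hm; unfold wfun; split_ifs <;> omega)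
    (by intro m hm; unfold wfun; split_ifs <;> omega)
    (by intro m hm; unfold wfun; split_ifs <;> omega)

def uf (P k d r t : ℕ) : ℕ :=
  if P ≤ t ∧ t < P + r then t + d + 1
  else if t = P + r then P
  else if P + r < t ∧ t ≤ P + k then t + d
  else if P + k < t ∧ t ≤ P + k + d then t - k
  else t

def ug (P k d r u : ℕ) : ℕ :=
  if u = P then P + r
  else if P < u ∧ u ≤ P + d then u + k
  else if P + d < u ∧ u ≤ P + r + d then u - d - 1
  else if P + r + d < u ∧ u ≤ P + k + d then u - d
  else u

def uP (n P k d r : ℕ) (hr : r ≤ k) (hk : 1 ≤ k) (hd : 1 ≤ d) (h : P + k + d < n) :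
    Equiv.Perm (Fin n) :=
  mk' n (uf P k d r) (ug P k d r)
    (by intro m hm; unfold uf; split_ifs <;> omega)
    (by intro m hm; unfold ug; split_ifs <;> omega)
    (by intro m hm; unfold uf; split_ifs <;> (unfold ug; split_ifs <;> omega))
    (by intro m hm; unfold ug; split_ifs <;> (unfold uf; split_ifs <;> omega))

def vf (P k d m t : ℕ) : ℕ :=
  if P ≤ t ∧ t < P + k then t + d + 1
  else if t = P + k then P
  else if P + k < t ∧ t < P + k + d + 1 - m then t - k
  else if t = P + k + d + 1 - m then P + k + d + 1
  else if P + k + d + 1 - m < t ∧ t ≤ P + k + d + 1 then t - k - 1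
  else t

def vg (P k d m u : ℕ) : ℕ :=
  if u = P then P + k
  else if P < u ∧ u < P + d + 1 - m then u + k
  else if P + d - m < u ∧ u ≤ P + d then u + k + 1
  else if P + d < u ∧ u ≤ P + k + d then u - d - 1
  else if u = P + k + d + 1 then P + k + d + 1 - m
  else u

def vP (n P k d m : ℕ) (hm : m ≤ d) (hk : 1 ≤ k) (hd : 1 ≤ d) (h : P + k + d + 1 < n) :
    Equiv.Perm (Fin n) :=
  mk' n (vf P k d m) (vg P k d m)
    (by intro t ht; unfold vf; split_ifs <;> omega)
    (by intro t ht; unfold vg; split_ifs <;> omega)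
    (by intro t ht; unfold vf; split_ifs <;> (unfold vg; split_ifs <;> omega))
    (by intro t ht; unfold vg; split_ifs <;> (unfold vf; split_ifs <;> omega))

section chain
variable {n P k d : ℕ}

lemma wP_eq_uP0 (hk : 1 ≤ k) (hd : 1 ≤ d) (h : P + k + d + 1 < n) :
    wP n (P+1) k d (by omega) = uP n P k d 0 (by omega) hk hd (by omega) := by
  apply Equiv.ext; intro t
  apply Fin.ext
  simp only [wP, uP, mk'_apply, wfun, uf]
  split_ifs <;> omega

lemma uP_step (hk : 1 ≤ k) (hd : 1 ≤ d) (h : P + k + d + 1 < n) (r : ℕ) (hr : r < k) :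
    uP n P k d r (by omega) hk hd (by omega) * Equiv.swap ⟨P + r, by omega⟩ ⟨P + r + 1, by omega⟩
      = uP n P k d (r+1) (by omega) hk hd (by omega) := by
  apply Equiv.ext; intro t
  rw [Equiv.Perm.mul_apply]
  rcases eq_or_ne t ⟨P + r, by omega⟩ with rfl | h1
  · rw [Equiv.swap_apply_left]
    apply Fin.ext; simp only [uP, mk'_apply, uf]; split_ifs <;> omega
  · rcases eq_or_ne t ⟨P + r + 1, by omega⟩ with rfl | h2
    · rw [Equiv.swap_apply_right]
      apply Fin.ext; simp only [uP, mk'_apply, uf]; split_ifs <;> omega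
    · rw [Equiv.swap_apply_of_ne_of_ne h1 h2]
      have v1 : (t : ℕ) ≠ P + r := fun e => h1 (Fin.ext e)
      have v2 : (t : ℕ) ≠ P + r + 1 := fun e => h2 (Fin.ext e)
      apply Fin.ext; simp only [uP, mk'_apply, uf]; split_ifs <;> omega

lemma uP_lt (hk : 1 ≤ k) (hd : 1 ≤ d) (h : P + k + d + 1 < n) (r : ℕ) (hr : r < k) :
    (uP n P k d r (by omega) hk hd (by omega)) ⟨P + r, by omega⟩
      < (uP n P k d r (by omega) hk hd (by omega)) ⟨P + r + 1, by omega⟩ := by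
  rw [Fin.lt_def]; simp only [uP, mk'_apply, uf]; split_ifs <;> omega

lemma uP_chain (hk : 1 ≤ k) (hd : 1 ≤ d) (h : P + k + d + 1 < n) : ∀ r (hr : r ≤ k),
    BruhatLE (uP n P k d 0 (by omega) hk hd (by omega))
      (uP n P k d r hr hk hd (by omega)) := by
  intro r
  induction r with
  | zero => intro _; exact Relation.ReflTransGen.refl
  | succ r ih =>
    intro hr
    exact Relation.ReflTransGen.trans (ih (by omega))
      (le_of_step_eq (P + r) (by omega) (uP_lt hk hd h r (by omega))
        (uP_step hk hd h r (by omega)))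

lemma uPk_eq_vP0 (hk : 1 ≤ k) (hd : 1 ≤ d) (h : P + k + d + 1 < n) :
    uP n P k d k (le_refl k) hk hd (by omega) = vP n P k d 0 (by omega) hk hd h := by
  apply Equiv.ext; intro t
  apply Fin.ext
  simp only [uP, vP, mk'_apply, uf, vf]
  split_ifs <;> omega

lemma vP_step (hk : 1 ≤ k) (hd : 1 ≤ d) (h : P + k + d + 1 < n) (m : ℕ) (hm : m < d) :
    vP n P k d m (by omega) hk hd h *
        Equiv.swap ⟨P + k + d - m, by omega⟩ ⟨P + k + d - m + 1, by omega⟩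
      = vP n P k d (m+1) (by omega) hk hd h := by
  apply Equiv.ext; intro t
  rw [Equiv.Perm.mul_apply]
  rcases eq_or_ne t ⟨P + k + d - m, by omega⟩ with rfl | h1
  · rw [Equiv.swap_apply_left]
    apply Fin.ext; simp only [vP, mk'_apply, vf]; split_ifs <;> omega
  · rcases eq_or_ne t ⟨P + k + d - m + 1, by omega⟩ with rfl | h2
    · rw [Equiv.swap_apply_right]
      apply Fin.ext; simp only [vP, mk'_apply, vf]; split_ifs <;> omega
    · rw [Equiv.swap_apply_of_ne_of_ne h1 h2]
      have v1 : (t : ℕ) ≠ P + k + d - m := fun e => h1 (Fin.ext e)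
      have v2 : (t : ℕ) ≠ P + k + d - m + 1 := fun e => h2 (Fin.ext e)
      apply Fin.ext; simp only [vP, mk'_apply, vf]; split_ifs <;> omega

lemma vP_lt (hk : 1 ≤ k) (hd : 1 ≤ d) (h : P + k + d + 1 < n) (m : ℕ) (hm : m < d) :
    (vP n P k d m (by omega) hk hd h) ⟨P + k + d - m, by omega⟩
      < (vP n P k d m (by omega) hk hd h) ⟨P + k + d - m + 1, by omega⟩ := by
  rw [Fin.lt_def]; simp only [vP, mk'_apply, vf]; split_ifs <;> omega

lemma vP_chain (hk : 1 ≤ k) (hd : 1 ≤ d) (h : P + k + d + 1 < n) : ∀ m (hm : m ≤ d),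
    BruhatLE (vP n P k d 0 (by omega) hk hd h) (vP n P k d m hm hk hd h) := by
  intro m
  induction m with
  | zero => intro _; exact Relation.ReflTransGen.refl
  | succ m ih =>
    intro hm
    exact Relation.ReflTransGen.trans (ih (by omega))
      (le_of_step_eq (P + k + d - m) (by omega) (vP_lt hk hd h m (by omega))
        (vP_step hk hd h m (by omega)))

lemma vPd_step (hk : 1 ≤ k) (hd : 1 ≤ d) (h : P + k + d + 1 < n) :
    vP n P k d d (le_refl d) hk hd h * Equiv.swap ⟨P + k, by omega⟩ ⟨P + k + 1, by omega⟩
      = wP n P (k+1) (d+1) (by omega) := by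
  apply Equiv.ext; intro t
  rw [Equiv.Perm.mul_apply]
  rcases eq_or_ne t ⟨P + k, by omega⟩ with rfl | h1
  · rw [Equiv.swap_apply_left]
    apply Fin.ext; simp only [vP, wP, mk'_apply, vf, wfun]; split_ifs <;> omega
  · rcases eq_or_ne t ⟨P + k + 1, by omega⟩ with rfl | h2
    · rw [Equiv.swap_apply_right]
      apply Fin.ext; simp only [vP, wP, mk'_apply, vf, wfun]; split_ifs <;> omega
    · rw [Equiv.swap_apply_of_ne_of_ne h1 h2]
      have v1 : (t : ℕ) ≠ P + k := fun e => h1 (Fin.ext e)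
      have v2 : (t : ℕ) ≠ P + k + 1 := fun e => h2 (Fin.ext e)
      apply Fin.ext; simp only [vP, wP, mk'_apply, vf, wfun]; split_ifs <;> omega

lemma vPd_lt (hk : 1 ≤ k) (hd : 1 ≤ d) (h : P + k + d + 1 < n) :
    (vP n P k d d (le_refl d) hk hd h) ⟨P + k, by omega⟩
      < (vP n P k d d (le_refl d) hk hd h) ⟨P + k + 1, by omega⟩ := by
  rw [Fin.lt_def]; simp only [vP, mk'_apply, vf]; split_ifs <;> omega

lemma wP_le_succ (hk : 1 ≤ k) (hd : 1 ≤ d) (h : P + k + d + 1 < n) :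
    BruhatLE (wP n (P+1) k d (by omega)) (wP n P (k+1) (d+1) (by omega)) := by
  rw [wP_eq_uP0 hk hd h]
  refine Relation.ReflTransGen.trans (uP_chain hk hd h k (le_refl k)) ?_
  rw [uPk_eq_vP0 hk hd h]
  refine Relation.ReflTransGen.trans (vP_chain hk hd h d (le_refl d)) ?_
  exact le_of_step_eq (P + k) (by omega) (vPd_lt hk hd h) (vPd_step hk hd h)

lemma wP_le_succ' {n P k d : ℕ} (hk : 1 ≤ k) (hd : 1 ≤ d) (h : P + k + d + 1 < n)
    (P1 k1 d1 P2 k2 d2 : ℕ)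
    (e1 : P1 = P + 1) (e2 : k1 = k) (e3 : d1 = d)
    (e4 : P2 = P) (e5 : k2 = k + 1) (e6 : d2 = d + 1)
    (hb1 : P1 + k1 + d1 ≤ n) (hb2 : P2 + k2 + d2 ≤ n) :
    BruhatLE (wP n P1 k1 d1 hb1) (wP n P2 k2 d2 hb2) := by
  subst e1; subst e2; subst e3; subst e4; subst e5; subst e6
  exact wP_le_succ hk hd h

end chain

-- ======================================================================
-- Classification at the ℕ level
-- ======================================================================

section classify
variable {n ii jj : ℕ} {F G : ℕ → ℕ}

lemma partA (hjj : jj + 1 < n) (hii : ii + 1 < n)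
    (hFn : ∀ t, t < n → F t < n)
    (hGF : ∀ t, t < n → G (F t) = t)
    (hFG : ∀ v, v < n → F (G v) = v)
    (hGn : ∀ v, v < n → G v < n)
    (mF : ∀ t1 t2, t1 < t2 → t2 < n → (jj < t1 ∨ t2 ≤ jj) → F t1 < F t2)
    (mG : ∀ v1 v2, v1 < v2 → v2 < n → (ii < v1 ∨ v2 ≤ ii) → G v1 < G v2)
    (dG : G (ii + 1) < G ii) :
    ∃ k, 1 ≤ k ∧ k ≤ jj + 1 ∧ jj < ii + k ∧ ii + k < n ∧
      (∀ m, m < k → F (jj - m) = ii + k - m) ∧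
      (∀ t, t + k ≤ jj → F t = t) := by
  have A0 : ii < F jj := by
    by_contra hle
    push_neg at hle
    have hblk : ∀ t, t ≤ jj → F t ≤ ii := by
      intro t ht
      rcases eq_or_lt_of_le ht with rfl | hlt
      · exact hle
      · exact le_trans (le_of_lt (mF t jj hlt (by omega) (by omega))) hle
    have hq1jj : jj < G (ii + 1) := by
      by_contra hc
      push_neg at hc
      have h1 : F (G (ii + 1)) = ii + 1 := hFG _ (by omega)
      have h2 := hblk (G (ii + 1)) hc
      omega
    have hq0n : G ii < n := hGn _ (by omega)
    have hlt2 : F (G (ii + 1)) < F (G ii) := mF _ _ dG hq0n (by omega)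
    rw [hFG _ (by omega), hFG _ (by omega)] at hlt2
    omega
  set k := F jj - ii with hk
  have hxjj : F jj = ii + k := by omega
  have A1 : ∀ m, m < k → m ≤ jj → F (jj - m) = ii + k - m := by
    intro m
    induction m with
    | zero => intro _ _; simpa using hxjj
    | succ m ih =>
      intro hm hmjj
      have hprev := ih (by omega) (by omega)
      have hvn : ii + k - m < n := by
        have := hFn jj (by omega); omega
      have hpv : G (ii + k - m) = jj - m := by
        rw [← hprev]; exact hGF _ (by omega)
      have hq : G (ii + k - m - 1) < G (ii + k - m) := mG _ _ (by omega) hvn (by omega)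
      rw [hpv] at hq
      have hxq : F (G (ii + k - m - 1)) = ii + k - m - 1 := hFG _ (by omega)
      set q := G (ii + k - m - 1) with hqdef
      rcases eq_or_lt_of_le (Nat.le_sub_one_of_lt hq) with heq | hlt
      · rw [show jj - (m + 1) = q by omega, hxq]; omega
      · exfalso
        have h1 : F q < F (jj - m - 1) := mF _ _ (by omega) (by omega) (by omega)
        have h2 : F (jj - m - 1) < F (jj - m) := mF _ _ (by omega) (by omega) (by omega)
        omega
  have A2 : k ≤ jj + 1 := by
    by_contra hc
    push_neg at hc
    have h0 := A1 jj (by omega) (le_refl jj)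
    rw [Nat.sub_self] at h0
    have hvn : ii + k - jj < n := by have := hFn jj (by omega); omega
    have hpv : G (ii + k - jj) = 0 := by rw [← h0]; exact hGF _ (by omega)
    have hq : G (ii + k - jj - 1) < G (ii + k - jj) := mG _ _ (by omega) hvn (by omega)
    omega
  have A3 : ∀ t, t + k ≤ jj → F t = t := by
    intro t
    induction t using Nat.strong_induction_on with
    | _ t IH =>
      intro ht
      have hup : F t < ii + 1 := by
        have h1 := A1 (k - 1) (by omega) (by omega)
        have h2 : F t < F (jj - (k - 1)) := mF _ _ (by omega) (by omega) (by omega)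
        omega
      have hlo : t ≤ F t := by
        rcases Nat.eq_zero_or_pos t with rfl | hpos
        · omega
        · have h1 := IH (t - 1) (by omega) (by omega)
          have h2 : F (t - 1) < F t := mF _ _ (by omega) (by omega) (by omega)
          omega
      by_contra hne
      have hgt : t < F t := by omega
      have hqt : G t < t := by
        have := mG t (F t) hgt (hFn t (by omega)) (by omega)
        rwa [hGF t (by omega)] at this
      have h1 := IH (G t) hqt (by omega)
      have h2 : F (G t) = t := hFG _ (by omega)
      omega
  have A4 : jj < ii + k := by
    by_contra hc
    push_neg at hc
    have hfix : F ii = ii := A3 ii (by omega)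
    have hpv : G ii = ii := by have h := hGF ii (by omega); rwa [hfix] at h
    rw [hpv] at dG
    have h1 : F (G (ii + 1)) = ii + 1 := hFG _ (by omega)
    have h2 := A3 (G (ii + 1)) (by omega)
    omega
  have hikn : ii + k < n := by have := hFn jj (by omega); omega
  exact ⟨k, by omega, A2, A4, hikn, fun m hm => A1 m hm (by omega), A3⟩

lemma partB (hjj : jj + 1 < n) (hii : ii + 1 < n)
    (hFn : ∀ t, t < n → F t < n)
    (hGF : ∀ t, t < n → G (F t) = t)
    (hFG : ∀ v, v < n → F (G v) = v)
    (hGn : ∀ v, v < n → G v < n)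
    (mF : ∀ t1 t2, t1 < t2 → t2 < n → (jj < t1 ∨ t2 ≤ jj) → F t1 < F t2)
    (mG : ∀ v1 v2, v1 < v2 → v2 < n → (ii < v1 ∨ v2 ≤ ii) → G v1 < G v2)
    (dF : F (jj + 1) < F jj)
    (dG : G (ii + 1) < G ii) :
    ∃ k, 1 ≤ k ∧ k ≤ jj + 1 ∧ jj < ii + k ∧ ii + k < n ∧
      (∀ t, t < n → F t = wfun (jj + 1 - k) k (ii + k - jj) t) := by
  obtain ⟨k, hk1, A2, A4, hikn, B1, B2⟩ :=
    partA hjj hii hFn hGF hFG hGn mF mG dG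
  obtain ⟨k', hk1', A2', A4', hikn', B1', B2'⟩ :=
    partA hii hjj hGn hFG hGF hFn mG mF dF
  have hc1 : ¬ (ii + k < jj + k') := by
    intro hlt
    rcases eq_or_lt_of_le A2 with heq | hlt2
    · omega
    · have hv : F (jj - k) = jj - k := B2 (jj - k) (by omega)
      have hgv : G (jj - k) = jj - k := by
        have h := hGF (jj - k) (by omega); rwa [hv] at h
      have hB := B1' (ii - (jj - k)) (by omega)
      rw [show ii - (ii - (jj - k)) = jj - k by omega] at hB
      omega
  have hc2 : ¬ (jj + k' < ii + k) := by
    intro hlt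
    rcases eq_or_lt_of_le A2' with heq | hlt2
    · omega
    · have hv : G (ii - k') = ii - k' := B2' (ii - k') (by omega)
      have hgv : F (ii - k') = ii - k' := by
        have h := hFG (ii - k') (by omega); rwa [hv] at h
      have hB := B1 (jj - (ii - k')) (by omega)
      rw [show jj - (jj - (ii - k')) = ii - k' by omega] at hB
      omega
  have hE : ii + k = jj + k' := by omega
  have L5 : ∀ s t, t < n → ii + k < t → n ≤ t + s → F t = t := by
    intro s
    induction s with
    | zero => intro t ht h1 h2; omega
    | succ s ih =>
      intro t ht h1 h2
      have hq : G t < n := hGn t ht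
      have hFq : F (G t) = t := hFG t ht
      have h3 : ¬ (G t + k ≤ jj) := fun hcc => by have := B2 _ hcc; omega
      have h4 : ¬ (G t ≤ jj) := by
        intro hcc
        have hB := B1 (jj - G t) (by omega)
        rw [show jj - (jj - G t) = G t by omega] at hB
        omega
      have h5 : ¬ (G t ≤ jj + k') := by
        intro hcc
        have hB := B1' (jj + k' - G t) (by omega)
        rw [show jj + k' - (jj + k' - G t) = G t by omega] at hB
        have e : F (G (ii - (jj + k' - G t))) = F (G t) := by rw [hB]
        rw [hFG _ (by omega), hFq] at e
        omega
      have h6 : G t ≤ t := by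
        by_contra hcc
        push_neg at hcc
        have := ih (G t) hq (by omega) (by omega)
        omega
      rcases eq_or_lt_of_le h6 with heq | hlt
      · have h7 := hFq; rw [heq] at h7; exact h7
      · have h7 : F (G t) < F t := mF _ _ hlt ht (by omega)
        rw [hFq] at h7
        have h8 := ih (F t) (hFn t ht) (by omega) (by omega)
        have h9 : G (F t) = t := hGF t ht
        have h10 : G (F (F t)) = F t := hGF (F t) (hFn t ht)
        rw [h8] at h10
        omega
  refine ⟨k, hk1, A2, A4, hikn, ?_⟩
  intro t ht
  rcases Nat.lt_or_ge t (jj + 1 - k) with h | h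
  · have hB : F t = t := B2 t (by omega)
    simp only [wfun]; split_ifs <;> omega
  · rcases le_or_gt t jj with h' | h'
    · have hB := B1 (jj - t) (by omega)
      rw [show jj - (jj - t) = t by omega] at hB
      simp only [wfun]; split_ifs <;> omega
    · rcases le_or_gt t (ii + k) with h'' | h''
      · have hB := B1' (jj + k' - t) (by omega)
        have e : F (G (ii - (jj + k' - t))) = ii - (jj + k' - t) := hFG _ (by omega)
        rw [show jj + k' - (jj + k' - t) = t by omega] at hB
        rw [hB] at e
        simp only [wfun]; split_ifs <;> omega
      · have hB : F t = t := L5 n t ht h'' (by omega)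
        simp only [wfun]; split_ifs <;> omega

end classify

-- ======================================================================
-- Chain between classified permutations
-- ======================================================================

lemma wchain {n ii jj : ℕ} (k1 : ℕ) (hk1 : 1 ≤ k1) (hd1 : jj < ii + k1) :
    ∀ k2, (h12 : k1 ≤ k2) → (hup : k2 ≤ jj + 1) → (hnn : ii + k2 < n) →
      BruhatLE (wP n (jj + 1 - k1) k1 (ii + k1 - jj) (by omega))
        (wP n (jj + 1 - k2) k2 (ii + k2 - jj) (by omega)) := by
  intro k2 hle
  induction k2, hle using Nat.le_induction with
  | base => intro _ _; exact Relation.ReflTransGen.refl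
  | succ k hk ih =>
    intro hup hn
    refine Relation.ReflTransGen.trans (ih (by omega) (by omega)) ?_
    exact wP_le_succ' (P := jj - k) (k := k) (d := ii + k - jj)
      (by omega) (by omega) (by omega) _ _ _ _ _ _
      (by omega) rfl rfl (by omega) rfl (by omega) _ _

-- ======================================================================
-- Boundary: from descent data to ℕ-level data
-- ======================================================================

/-- value function of a permutation, as a function `ℕ → ℕ`. -/
def vfn {n : ℕ} (w : Equiv.Perm (Fin n)) (t : ℕ) : ℕ :=
  if h : t < n then ((w ⟨t, h⟩ : Fin n) : ℕ) else t

lemma vfn_lt {n : ℕ} (w : Equiv.Perm (Fin n)) (t : ℕ) (ht : t < n) : vfn w t < n := by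
  unfold vfn; rw [dif_pos ht]; exact (w ⟨t, ht⟩).2

lemma vfn_inv {n : ℕ} (w : Equiv.Perm (Fin n)) (t : ℕ) (ht : t < n) :
    vfn w⁻¹ (vfn w t) = t := by
  unfold vfn
  rw [dif_pos ht, dif_pos (w ⟨t, ht⟩).2]
  have : (⟨((w ⟨t, ht⟩ : Fin n) : ℕ), (w ⟨t, ht⟩).2⟩ : Fin n) = w ⟨t, ht⟩ := Fin.ext rfl
  rw [this]; simp

/-- the unique right descent at `j` gives the ℕ-level step data. -/
lemma rd_step {n : ℕ} (w : Equiv.Perm (Fin n)) (j : ℕ) (hn : 2 ≤ n)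
    (hd : IsRightDescent w j) (hu : ∀ m, IsRightDescent w m → m = j) :
    (∀ a, a + 1 < n → a ≠ j - 1 → vfn w a < vfn w (a + 1)) ∧
      vfn w (j - 1 + 1) < vfn w (j - 1) := by
  obtain ⟨hj1, hj2, hlen⟩ := hd
  have hjn : j - 1 + 1 < n := by omega
  constructor
  · intro a ha hne
    have hnd : ¬ IsRightDescent w (a + 1) := fun hcc => by
      have := hu (a + 1) hcc; omega
    unfold IsRightDescent at hnd
    push_neg at hnd
    have h3 := hnd (by omega) (by omega)
    have h4 : ¬ (w ⟨a + 1, ha⟩ < w ⟨a, by omega⟩) := by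
      rw [← rdesc_iff w a ha]; exact not_lt.mpr h3
    have hne2 : w ⟨a, by omega⟩ ≠ w ⟨a + 1, ha⟩ := by
      intro e
      have h5 := w.injective e
      have h6 : (a : ℕ) = a + 1 := congrArg Fin.val h5
      omega
    have : w ⟨a, by omega⟩ < w ⟨a + 1, ha⟩ := lt_of_le_of_ne (not_lt.mp h4) hne2
    unfold vfn
    rw [dif_pos (by omega : a < n), dif_pos ha]
    exact this
  · have hj : j = (j - 1) + 1 := by omega
    rw [hj] at hlen
    rw [rdesc_iff w (j - 1) hjn] at hlen
    unfold vfn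
    rw [dif_pos hjn, dif_pos (by omega : j - 1 < n)]
    exact hlen

lemma mono_of_step {n jj : ℕ} {F : ℕ → ℕ}
    (H : ∀ a, a + 1 < n → a ≠ jj → F a < F (a + 1)) :
    ∀ t1 t2, t1 < t2 → t2 < n → (jj < t1 ∨ t2 ≤ jj) → F t1 < F t2 := by
  intro t1 t2
  induction t2 with
  | zero => omega
  | succ t ih =>
    intro h1 h2 hside
    rcases eq_or_lt_of_le (Nat.lt_succ_iff.mp h1) with rfl | hlt
    · exact H t1 h2 (by omega)
    · exact lt_trans (ih hlt (by omega) (by omega)) (H t h2 (by omega))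

-- ======================================================================
-- Main theorem
-- ======================================================================

theorem stmt2 (n : ℕ) (hn : 2 ≤ n) (i j : ℕ)
    (hi1 : 1 ≤ i) (hi2 : i ≤ n - 1) (hj1 : 1 ≤ j) (hj2 : j ≤ n - 1)
    (x y : Equiv.Perm (Fin n))
    (hx : Bigrassmannian x ∧ IsLeftDescent x i ∧ IsRightDescent x j)
    (hy : Bigrassmannian y ∧ IsLeftDescent y i ∧ IsRightDescent y j) :
    BruhatLE x y ∨ BruhatLE y x := by
  obtain ⟨hbx, hxld, hxrd⟩ := hx
  obtain ⟨hby, hyld, hyrd⟩ := hy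
  have hjjn : (j - 1) + 1 < n := by omega
  have hiin : (i - 1) + 1 < n := by omega
  -- x data
  have hux_r : ∀ m, IsRightDescent x m → m = j := fun m hm => hbx.2.unique hm hxrd
  have hux_l : ∀ m, IsLeftDescent x m → m = i := fun m hm => hbx.1.unique hm hxld
  have hxird : IsRightDescent x⁻¹ i := (ldesc_iff_rdesc_inv x i).mp hxld
  have hux_li : ∀ m, IsRightDescent x⁻¹ m → m = i :=
    fun m hm => hux_l m ((ldesc_iff_rdesc_inv x m).mpr hm)
  obtain ⟨sx, dx⟩ := rd_step x j hn hxrd hux_r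
  obtain ⟨sxi, dxi⟩ := rd_step x⁻¹ i hn hxird hux_li
  obtain ⟨kx, hkx1, hkx2, hkx3, hkx4, hfx⟩ :=
    partB (F := vfn x) (G := vfn x⁻¹) hjjn hiin (vfn_lt x) (vfn_inv x)
      (by intro v hv; have := vfn_inv x⁻¹ v hv; rwa [inv_inv] at this)
      (vfn_lt x⁻¹) (mono_of_step sx) (mono_of_step sxi) dx dxi
  -- y data
  have huy_r : ∀ m, IsRightDescent y m → m = j := fun m hm => hby.2.unique hm hyrd
  have huy_l : ∀ m, IsLeftDescent y m → m = i := fun m hm => hby.1.unique hm hyld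
  have hyird : IsRightDescent y⁻¹ i := (ldesc_iff_rdesc_inv y i).mp hyld
  have huy_li : ∀ m, IsRightDescent y⁻¹ m → m = i :=
    fun m hm => huy_l m ((ldesc_iff_rdesc_inv y m).mpr hm)
  obtain ⟨sy, dy⟩ := rd_step y j hn hyrd huy_r
  obtain ⟨syi, dyi⟩ := rd_step y⁻¹ i hn hyird huy_li
  obtain ⟨ky, hky1, hky2, hky3, hky4, hfy⟩ :=
    partB (F := vfn y) (G := vfn y⁻¹) hjjn hiin (vfn_lt y) (vfn_inv y)
      (by intro v hv; have := vfn_inv y⁻¹ v hv; rwa [inv_inv] at this)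
      (vfn_lt y⁻¹) (mono_of_step sy) (mono_of_step syi) dy dyi
  -- identify x and y with explicit block-move permutations
  have hxw : x = wP n ((j - 1) + 1 - kx) kx ((i - 1) + kx - (j - 1)) (by omega) := by
    apply Equiv.ext; intro t
    apply Fin.ext
    have h1 := hfx t.1 t.2
    unfold vfn at h1
    rw [dif_pos t.2] at h1
    simp only [Fin.eta] at h1
    simpa only [wP, mk'_apply] using h1
  have hyw : y = wP n ((j - 1) + 1 - ky) ky ((i - 1) + ky - (j - 1)) (by omega) := by
    apply Equiv.ext; intro t
    apply Fin.ext
    have h1 := hfy t.1 t.2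
    unfold vfn at h1
    rw [dif_pos t.2] at h1
    simp only [Fin.eta] at h1
    simpa only [wP, mk'_apply] using h1
  rcases le_total kx ky with hkk | hkk
  · left; rw [hxw, hyw]; exact wchain kx hkx1 hkx3 ky hkk hky2 hky4
  · right; rw [hxw, hyw]; exact wchain ky hky1 hky3 kx hkk hkx2 hkx4

end Paper
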